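/- Let q be a prime power, m ≥ 2, and let r be a positive divisor of q − 1. Set t = r·(q^m − 1)/(q − 1). For γ ∈ E, define F_γ(X) = (X + γ)^{t+1} − (X + γ) ∈ E[X]. Then F_γ has exactly t + 1 distinct roots in E, and for every root α of F_γ the derivative value F_γ'(α) lies in the image of F^* in E under the algebra map. -/

import Mathlib

open Polynomial

/-- Lemma: the auxiliary polynomial `F_γ`. With `m ≥ 2`, `r ∣ q - 1`
and `t = r(q^m - 1)/(q - 1)`, for any `γ ∈ E` the polynomial
`F_γ(X) = (X + γ)^{t+1} - (X + γ)` has exactly `t + 1` distinct roots in `E`, and at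
every root the value of its derivative lies in the image of `F^*` under the algebra
map. -/
theorem auxiliary_polynomial_roots
    (q m r t : ℕ) (hq : IsPrimePow q) (hm : 2 ≤ m)
    (hr : 0 < r) (hrq : r ∣ q - 1) (ht : t * (q - 1) = r * (q ^ m - 1))
    (F E : Type) [Field F] [Fintype F] [Field E] [Fintype E] [Algebra F E]
    (hF : Fintype.card F = q) (hE : Fintype.card E = q ^ m)
    (γ : E) :
    {x : E | ((X + C γ) ^ (t + 1) - (X + C γ) : Polynomial E).eval x = 0}.ncard = t + 1 ∧
    ∀ x : E, ((X + C γ) ^ (t + 1) - (X + C γ) : Polynomial E).eval x = 0 →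
      ∃ a : F, a ≠ 0 ∧ algebraMap F E a =
        (Polynomial.derivative ((X + C γ) ^ (t + 1) - (X + C γ) : Polynomial E)).eval x := by
  classical
  have hq2 : 2 ≤ q := hq.two_le
  have hqm1 : 1 < q ^ m := by
    calc 1 < q := hq2
    _ ≤ q ^ m := Nat.le_self_pow (by omega) q
  -- t is positive
  have htpos : 0 < t := by
    rcases Nat.eq_zero_or_pos t with h | h
    · exfalso
      rw [h, zero_mul] at ht
      have : 0 < r * (q ^ m - 1) := Nat.mul_pos hr (by omega)
      omega
    · exact h
  -- t divides q^m - 1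
  obtain ⟨s, hs⟩ := hrq
  have htdvd : t ∣ q ^ m - 1 := by
    refine ⟨s, ?_⟩
    have h1 : t * s * r = (q ^ m - 1) * r := by
      calc t * s * r = t * (q - 1) := by rw [hs]; ring
      _ = r * (q ^ m - 1) := ht
      _ = (q ^ m - 1) * r := by ring
    exact Nat.eq_of_mul_eq_mul_right hr h1.symm
  -- characteristic facts: (t : E) ≠ 0
  set p := ringChar E with hp
  haveI : CharP E p := ringChar.charP E
  obtain ⟨n, hpprime, hcard⟩ := FiniteField.card E p
  have hpdvd : p ∣ q ^ m := by
    rw [← hE, hcard]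
    exact dvd_pow_self p n.pos.ne'
  have hptne : ¬ p ∣ t := by
    intro hpt
    have h1 : p ∣ q ^ m - 1 := hpt.trans htdvd
    have h2 : p ∣ q ^ m - (q ^ m - 1) := Nat.dvd_sub hpdvd h1
    have h3 : q ^ m - (q ^ m - 1) = 1 := by omega
    rw [h3] at h2
    exact hpprime.one_lt.ne' (Nat.dvd_one.mp h2)
  have htE : (t : E) ≠ 0 := by
    intro h
    exact hptne ((CharP.cast_eq_zero_iff E p t).mp h)
  have htF : (t : F) ≠ 0 := by
    intro h
    apply htE
    have := congrArg (algebraMap F E) h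
    rwa [map_natCast, map_zero] at this
  -- a primitive t-th root of unity in E
  obtain ⟨g, hg⟩ := IsCyclic.exists_monoid_generator (α := Eˣ)
  have hord : orderOf (g : E) = q ^ m - 1 := by
    have hg' : ∀ y : Eˣ, y ∈ Subgroup.zpowers g := fun y => mem_powers_iff_mem_zpowers.mp (hg y)
    rw [orderOf_units, orderOf_eq_card_of_forall_mem_zpowers hg', Nat.card_eq_fintype_card,
      Fintype.card_units, hE]
  obtain ⟨d, hd⟩ := htdvd
  have hprim : IsPrimitiveRoot ((g : E) ^ d) t := by
    have h0 : IsPrimitiveRoot (g : E) (q ^ m - 1) := hord ▸ IsPrimitiveRoot.orderOf (g : E)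
    exact h0.pow (by omega) (by rw [hd]; ring)
  -- evaluation of the polynomial
  have heval : ∀ x : E, ((X + C γ) ^ (t + 1) - (X + C γ) : Polynomial E).eval x
      = (x + γ) ^ (t + 1) - (x + γ) := by intro x; simp
  -- root description
  have hroot : ∀ y : E, y ^ (t + 1) - y = 0 ↔ (y = 0 ∨ y ^ t = 1) := by
    intro y
    rw [sub_eq_zero]
    constructor
    · intro h
      rcases eq_or_ne y 0 with h0 | h0
      · exact Or.inl h0
      · right
        have : y * y ^ t = y * 1 := by rw [mul_one, ← pow_succ']; exact h
        exact mul_left_cancel₀ h0 this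
    · rintro (h0 | h0)
      · simp [h0, zero_pow (Nat.succ_ne_zero t)]
      · rw [pow_succ, h0, one_mul]
  -- the set of roots
  have hset : {x : E | ((X + C γ) ^ (t + 1) - (X + C γ) : Polynomial E).eval x = 0}
      = (fun y => y - γ) '' ↑(insert (0 : E) (nthRootsFinset t (1 : E))) := by
    ext x
    simp only [Set.mem_setOf_eq, heval, Set.mem_image, Finset.coe_insert, Set.mem_insert_iff,
      Finset.mem_coe, mem_nthRootsFinset htpos, hroot]
    constructor
    · intro h
      exact ⟨x + γ, by simpa using h, by ring⟩
    · rintro ⟨y, hy, rfl⟩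
      simpa using hy
  have hzero_not : (0 : E) ∉ nthRootsFinset t (1 : E) := by
    intro h
    rw [mem_nthRootsFinset htpos, zero_pow htpos.ne'] at h
    exact zero_ne_one h
  have hcount : {x : E | ((X + C γ) ^ (t + 1) - (X + C γ) : Polynomial E).eval x = 0}.ncard
      = t + 1 := by
    rw [hset, Set.ncard_image_of_injective _ (sub_left_injective), Set.ncard_coe_finset,
      Finset.card_insert_of_notMem hzero_not, hprim.card_nthRootsFinset, Nat.add_comm]
  refine ⟨hcount, ?_⟩
  -- derivative part
  intro x hx
  have hderiv : (Polynomial.derivative ((X + C γ) ^ (t + 1) - (X + C γ) : Polynomial E)).eval x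
      = (t + 1 : E) * (x + γ) ^ t - 1 := by
    simp [derivative_pow]
  rw [heval, hroot] at hx
  rcases hx with h0 | h0
  · refine ⟨-1, by norm_num, ?_⟩
    rw [hderiv, h0, zero_pow htpos.ne', mul_zero, zero_sub, map_neg, map_one]
  · refine ⟨(t : F), htF, ?_⟩
    rw [hderiv, h0, mul_one, add_sub_cancel_right, map_natCast]
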